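/- arXiv:1309.0300 — 10 statements merged into one kernel-verified Lean document; each statement's English description precedes it below -/
import Mathlib

section
/- Let U and A be left-cancellative monoids with an action map A × U → U, (a,u) ↦ a·u, and a restriction map A × U → A, (a,u) ↦ a|_u, satisfying the Zappa-Szép axioms (B1)–(B8). If for each a ∈ A the map u ↦ a·u is injective, then the Zappa-Szép product U ⋈ A (with multiplication (u,a)(v,b) = (u(a·v), (a|_v)b)) is left cancellative. -/
theorem stmt1
    {U A : Type*} [Monoid U] [Monoid A]
    (hU : ∀ a b c : U, a * b = a * c → b = c)
    (hA : ∀ a b c : A, a * b = a * c → b = c)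
    (act : A → U → U) (res : A → U → A)
    (B1 : ∀ u, act 1 u = u)
    (B2 : ∀ a b u, act (a * b) u = act a (act b u))
    (B3 : ∀ a, act a 1 = 1)
    (B4 : ∀ a, res a 1 = a)
    (B5 : ∀ a u v, act a (u * v) = act a u * act (res a u) v)
    (B6 : ∀ a u v, res a (u * v) = res (res a u) v)
    (B7 : ∀ u, res 1 u = 1)
    (B8 : ∀ a b u, res (a * b) u = res a (act b u) * res b u)
    (hinj : ∀ a : A, Function.Injective (act a)) :
    ∀ p q r : U × A,
      (p.1 * act p.2 q.1, res p.2 q.1 * q.2) = (p.1 * act p.2 r.1, res p.2 r.1 * r.2) →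
      q = r := by
  rintro ⟨u, a⟩ ⟨v, b⟩ ⟨w, c⟩ h
  simp only [Prod.mk.injEq] at h
  obtain ⟨h1, h2⟩ := h
  have hv : v = w := hinj a (hU _ _ _ h1)
  subst hv
  exact Prod.ext rfl (hA _ _ _ h2)
end

section
/- Let U and A be left-cancellative monoids with maps satisfying the Zappa-Szép axioms (B1)–(B8). Suppose U is a right LCM monoid, the family of principal right ideals of A is totally ordered by inclusion, and for each a ∈ A the map u ↦ a·u is a bijection of U. Then the Zappa-Szép product U ⋈ A is a right LCM monoid. -/
def IsRightMul {P : Type*} (mul : P → P → P) (p r : P) : Prop := ∃ q, mul p q = r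

def IsRCM {P : Type*} (mul : P → P → P) (p q r : P) : Prop :=
  IsRightMul mul p r ∧ IsRightMul mul q r

def IsRLCM {P : Type*} (mul : P → P → P) (p q r : P) : Prop :=
  IsRCM mul p q r ∧ ∀ s, IsRCM mul p q s → IsRightMul mul r s

theorem zs_key {U A : Type*} [Monoid U] [Monoid A]
    (hU : ∀ a b c : U, a * b = a * c → b = c)
    (act : A → U → U) (res : A → U → A)
    (B5 : ∀ a u v, act a (u * v) = act a u * act (res a u) v)
    (B6 : ∀ a u v, res a (u * v) = res (res a u) v)
    (hbij : ∀ a : A, Function.Bijective (act a))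
    (u v : U) (a b : A) (x0 y0 : U) (c : A)
    (hw : IsRLCM (· * ·) u v (u * act a x0))
    (heq : u * act a x0 = v * act b y0)
    (hc : res a x0 * c = res b y0) :
    IsRLCM (fun p q : U × A => (p.1 * act p.2 q.1, res p.2 q.1 * q.2))
      (u, a) (v, b) (u * act a x0, res b y0) := by
  constructor
  · exact ⟨⟨(x0, c), by simp [hc]⟩, ⟨(y0, 1), by simp [heq]⟩⟩
  · rintro ⟨m, d⟩ ⟨⟨⟨x, c1⟩, h1⟩, ⟨⟨y, c2⟩, h2⟩⟩
    have hm1 : u * act a x = m := congrArg Prod.fst h1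
    have hd1 : res a x * c1 = d := congrArg Prod.snd h1
    have hm2 : v * act b y = m := congrArg Prod.fst h2
    have hd2 : res b y * c2 = d := congrArg Prod.snd h2
    obtain ⟨t, ht⟩ := hw.2 m ⟨⟨act a x, hm1⟩, ⟨act b y, hm2⟩⟩
    simp only at ht
    obtain ⟨s, hs⟩ := (hbij (res b y0)).2 t
    have hy : y = y0 * s := by
      apply (hbij b).1
      rw [B5, hs]
      apply hU v
      rw [hm2, ← ht, heq, mul_assoc]
    refine ⟨(s, c2), ?_⟩
    simp only [Prod.mk.injEq]
    constructor
    · rw [hs, ht]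
    · rw [← B6, ← hy, hd2]

theorem stmt2
    {U A : Type*} [Monoid U] [Monoid A]
    (hU : ∀ a b c : U, a * b = a * c → b = c)
    (hA : ∀ a b c : A, a * b = a * c → b = c)
    (act : A → U → U) (res : A → U → A)
    (B1 : ∀ u, act 1 u = u)
    (B2 : ∀ a b u, act (a * b) u = act a (act b u))
    (B3 : ∀ a, act a 1 = 1)
    (B4 : ∀ a, res a 1 = a)
    (B5 : ∀ a u v, act a (u * v) = act a u * act (res a u) v)
    (B6 : ∀ a u v, res a (u * v) = res (res a u) v)
    (B7 : ∀ u, res 1 u = 1)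
    (B8 : ∀ a b u, res (a * b) u = res a (act b u) * res b u)
    (hUlcm : ∀ u v : U, (∃ w, IsRCM (· * ·) u v w) → ∃ w, IsRLCM (· * ·) u v w)
    (hAtot : ∀ a b : A, (∃ c, a * c = b) ∨ (∃ c, b * c = a))
    (hbij : ∀ a : A, Function.Bijective (act a)) :
    let zmul : U × A → U × A → U × A :=
      fun p q => (p.1 * act p.2 q.1, res p.2 q.1 * q.2)
    (∀ p q r : U × A, zmul p q = zmul p r → q = r) ∧
    (∀ p q : U × A, (∃ w, IsRCM zmul p q w) → ∃ w, IsRLCM zmul p q w) := by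
  intro zmul
  constructor
  · rintro ⟨u, a⟩ ⟨v, b⟩ ⟨v', b'⟩ h
    have h1 : u * act a v = u * act a v' := congrArg Prod.fst h
    have h2 : res a v * b = res a v' * b' := congrArg Prod.snd h
    have hv : v = v' := (hbij a).1 (hU _ _ _ h1)
    subst hv
    exact Prod.ext rfl (hA _ _ _ h2)
  · rintro ⟨u, a⟩ ⟨v, b⟩ ⟨⟨m, d⟩, ⟨⟨x, c1⟩, h1⟩, ⟨⟨y, c2⟩, h2⟩⟩
    have hm1 : u * act a x = m := congrArg Prod.fst h1
    have hm2 : v * act b y = m := congrArg Prod.fst h2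
    obtain ⟨w, hw⟩ := hUlcm u v ⟨m, ⟨act a x, hm1⟩, ⟨act b y, hm2⟩⟩
    obtain ⟨⟨p, hp⟩, ⟨q, hq⟩⟩ := hw.1
    simp only at hp hq
    obtain ⟨x0, hx0⟩ := (hbij a).2 p
    obtain ⟨y0, hy0⟩ := (hbij b).2 q
    have hwx : w = u * act a x0 := by rw [hx0, hp]
    have hwy : w = v * act b y0 := by rw [hy0, hq]
    have heq : u * act a x0 = v * act b y0 := by rw [← hwx, hwy]
    rcases hAtot (res a x0) (res b y0) with ⟨c, hc⟩ | ⟨c, hc⟩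
    · exact ⟨(u * act a x0, res b y0),
        zs_key hU act res B5 B6 hbij u v a b x0 y0 c (hwx ▸ hw) heq hc⟩
    · have hw' : IsRLCM (· * ·) v u (v * act b y0) := by
        rw [← hwy]
        exact ⟨⟨hw.1.2, hw.1.1⟩, fun s hs => hw.2 s ⟨hs.2, hs.1⟩⟩
      have := zs_key hU act res B5 B6 hbij v u b a y0 x0 c hw' heq.symm hc
      exact ⟨(v * act b y0, res a x0), ⟨this.1.2, this.1.1⟩,
        fun s hs => this.2 s ⟨hs.2, hs.1⟩⟩
end

section
/- Under the hypotheses of the Zappa-Szép right LCM lemma (U right LCM, principal right ideals of A totally ordered, actions bijective), for (u,a), (v,b) ∈ U ⋈ A one has (u,a)(U⋈A) ∩ (v,b)(U⋈A) = ∅ if and only if uU ∩ vU = ∅. -/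
theorem stmt3
    {U A : Type*} [Monoid U] [Monoid A]
    (hU : ∀ a b c : U, a * b = a * c → b = c)
    (hA : ∀ a b c : A, a * b = a * c → b = c)
    (act : A → U → U) (res : A → U → A)
    (B1 : ∀ u, act 1 u = u)
    (B2 : ∀ a b u, act (a * b) u = act a (act b u))
    (B3 : ∀ a, act a 1 = 1)
    (B4 : ∀ a, res a 1 = a)
    (B5 : ∀ a u v, act a (u * v) = act a u * act (res a u) v)
    (B6 : ∀ a u v, res a (u * v) = res (res a u) v)
    (B7 : ∀ u, res 1 u = 1)
    (B8 : ∀ a b u, res (a * b) u = res a (act b u) * res b u)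
    (hUlcm : ∀ u v : U, (∃ w, IsRCM (· * ·) u v w) → ∃ w, IsRLCM (· * ·) u v w)
    (hAtot : ∀ a b : A, (∃ c, a * c = b) ∨ (∃ c, b * c = a))
    (hbij : ∀ a : A, Function.Bijective (act a))
    (u v : U) (a b : A) :
    let zmul : U × A → U × A → U × A :=
      fun p q => (p.1 * act p.2 q.1, res p.2 q.1 * q.2)
    ((¬ ∃ w, IsRCM zmul (u, a) (v, b) w) ↔ ¬ ∃ w, IsRCM (· * ·) u v w) := by
  intro zmul
  apply not_congr
  constructor
  · rintro ⟨w, ⟨⟨p, c⟩, hp⟩, ⟨⟨q, d⟩, hq⟩⟩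
    exact ⟨w.1, ⟨act a p, congrArg Prod.fst hp⟩, ⟨act b q, congrArg Prod.fst hq⟩⟩
  · rintro ⟨w, ⟨x, hx⟩, ⟨y, hy⟩⟩
    obtain ⟨x', hx'⟩ := (hbij a).2 x
    obtain ⟨y', hy'⟩ := (hbij b).2 y
    rcases hAtot (res a x') (res b y') with ⟨c, hc⟩ | ⟨c, hc⟩
    · exact ⟨(w, res b y'), ⟨(x', c), by simp [zmul, hx', hx, hc]⟩,
        ⟨(y', 1), by simp [zmul, hy', hy]⟩⟩
    · exact ⟨(w, res a x'), ⟨(x', 1), by simp [zmul, hx', hx]⟩,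
        ⟨(y', c), by simp [zmul, hy', hy, hc]⟩⟩
end

section
/- Under the hypotheses of the Zappa-Szép right LCM lemma, if u, v ∈ U have a right LCM z ∈ U, then (z, e_A) is a right LCM of (u, e_A) and (v, e_A) in U ⋈ A. -/
theorem stmt4
    {U A : Type*} [Monoid U] [Monoid A]
    (hU : ∀ a b c : U, a * b = a * c → b = c)
    (hA : ∀ a b c : A, a * b = a * c → b = c)
    (act : A → U → U) (res : A → U → A)
    (B1 : ∀ u, act 1 u = u)
    (B2 : ∀ a b u, act (a * b) u = act a (act b u))
    (B3 : ∀ a, act a 1 = 1)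
    (B4 : ∀ a, res a 1 = a)
    (B5 : ∀ a u v, act a (u * v) = act a u * act (res a u) v)
    (B6 : ∀ a u v, res a (u * v) = res (res a u) v)
    (B7 : ∀ u, res 1 u = 1)
    (B8 : ∀ a b u, res (a * b) u = res a (act b u) * res b u)
    (hUlcm : ∀ u v : U, (∃ w, IsRCM (· * ·) u v w) → ∃ w, IsRLCM (· * ·) u v w)
    (hAtot : ∀ a b : A, (∃ c, a * c = b) ∨ (∃ c, b * c = a))
    (hbij : ∀ a : A, Function.Bijective (act a))
    (u v z : U) (hz : IsRLCM (· * ·) u v z) :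
    let zmul : U × A → U × A → U × A :=
      fun p q => (p.1 * act p.2 q.1, res p.2 q.1 * q.2)
    IsRLCM zmul (u, (1 : A)) (v, (1 : A)) (z, (1 : A)) := by
  intro zmul
  obtain ⟨⟨⟨p, hp⟩, ⟨q, hq⟩⟩, hmin⟩ := hz
  simp only [zmul, IsRLCM, IsRCM, IsRightMul]
  refine ⟨⟨⟨(p, 1), ?_⟩, ⟨(q, 1), ?_⟩⟩, ?_⟩
  · simp [B1, B7, hp]
  · simp [B1, B7, hq]
  · rintro ⟨s1, s2⟩ ⟨⟨a, ha⟩, ⟨b, hb⟩⟩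
    simp only [B1, B7, one_mul, Prod.mk.injEq] at ha hb
    obtain ⟨w, hw⟩ := hmin s1 ⟨⟨a.1, ha.1⟩, ⟨b.1, hb.1⟩⟩
    exact ⟨(w, s2), by simp [B1, B7, hw]⟩
end

section
/- Under the hypotheses of the Zappa-Szép right LCM lemma, for a ∈ A and u ∈ U, if z ∈ U is the unique element with a·z = u, then (u, a|_z) is a right LCM of (e_U, a) and (u, e_A) in U ⋈ A, and moreover (u, a|_z) = (e_U, a)(z, e_A) = (u, e_A)(e_U, a|_z). -/
theorem stmt5
    {U A : Type*} [Monoid U] [Monoid A]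
    (hU : ∀ a b c : U, a * b = a * c → b = c)
    (hA : ∀ a b c : A, a * b = a * c → b = c)
    (act : A → U → U) (res : A → U → A)
    (B1 : ∀ u, act 1 u = u)
    (B2 : ∀ a b u, act (a * b) u = act a (act b u))
    (B3 : ∀ a, act a 1 = 1)
    (B4 : ∀ a, res a 1 = a)
    (B5 : ∀ a u v, act a (u * v) = act a u * act (res a u) v)
    (B6 : ∀ a u v, res a (u * v) = res (res a u) v)
    (B7 : ∀ u, res 1 u = 1)
    (B8 : ∀ a b u, res (a * b) u = res a (act b u) * res b u)
    (hUlcm : ∀ u v : U, (∃ w, IsRCM (· * ·) u v w) → ∃ w, IsRLCM (· * ·) u v w)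
    (hAtot : ∀ a b : A, (∃ c, a * c = b) ∨ (∃ c, b * c = a))
    (hbij : ∀ a : A, Function.Bijective (act a))
    (a : A) (u z : U) (hz : act a z = u) :
    let zmul : U × A → U × A → U × A :=
      fun p q => (p.1 * act p.2 q.1, res p.2 q.1 * q.2)
    IsRLCM zmul ((1 : U), a) (u, (1 : A)) (u, res a z) ∧
    zmul ((1 : U), a) (z, (1 : A)) = (u, res a z) ∧
    zmul (u, (1 : A)) ((1 : U), res a z) = (u, res a z) := by
  intro zmul
  have e1 : zmul ((1 : U), a) (z, (1 : A)) = (u, res a z) := by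
    simp [zmul, hz]
  have e2 : zmul (u, (1 : A)) ((1 : U), res a z) = (u, res a z) := by
    simp [zmul, B1, B7]
  refine ⟨⟨⟨⟨(z, 1), e1⟩, ⟨((1 : U), res a z), e2⟩⟩, ?_⟩, e1, e2⟩
  rintro ⟨v, b⟩ ⟨⟨⟨x, c⟩, h1⟩, ⟨⟨y, d⟩, h2⟩⟩
  simp only [zmul, Prod.mk.injEq, one_mul, B1, B7] at h1 h2
  obtain ⟨w, hw⟩ := (hbij (res a z)).2 y
  have hx : x = z * w := by
    apply (hbij a).1
    rw [B5, hw, hz, h2.1, h1.1]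
  refine ⟨(w, c), ?_⟩
  simp only [zmul, Prod.mk.injEq]
  constructor
  · rw [hw, h2.1]
  · rw [← h1.2, hx, B6]
end

section
/- Consider the submonoid U = {(r,x) : x ∈ ℕ, x ≥ 1, 0 ≤ r ≤ x−1} of the semidirect product ℕ ⋊ ℕ× (with multiplication (m,a)(n,b) = (m+an, ab)). For (r,x), (s,y) ∈ U: if (r + xℕ) ∩ (s + yℕ) ≠ ∅, then (l, lcm(x,y)) is a right LCM of (r,x) and (s,y) in U, where l is the least element of (r + xℕ) ∩ (s + yℕ); if (r + xℕ) ∩ (s + yℕ) = ∅, then (r,x) and (s,y) have no right common multiple in U. -/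
def nmul (p q : ℕ × ℕ) : ℕ × ℕ := (p.1 + p.2 * q.1, p.2 * q.2)

def Umem (p : ℕ × ℕ) : Prop := 1 ≤ p.2 ∧ p.1 < p.2

def URmul (p r : ℕ × ℕ) : Prop := ∃ q, Umem q ∧ nmul p q = r

def URCM (p q r : ℕ × ℕ) : Prop := URmul p r ∧ URmul q r

def URLCM (p q r : ℕ × ℕ) : Prop := URCM p q r ∧ ∀ s, URCM p q s → URmul r s

theorem stmt7 (r x s y : ℕ) (hrx : Umem (r, x)) (hsy : Umem (s, y)) :
    (∀ l : ℕ, ((∃ i, l = r + x * i) ∧ (∃ j, l = s + y * j)) →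
      (∀ k : ℕ, ((∃ i, k = r + x * i) ∧ (∃ j, k = s + y * j)) → l ≤ k) →
      Umem (l, Nat.lcm x y) ∧ URLCM (r, x) (s, y) (l, Nat.lcm x y)) ∧
    ((¬ ∃ k : ℕ, (∃ i, k = r + x * i) ∧ (∃ j, k = s + y * j)) →
      ¬ ∃ w, URCM (r, x) (s, y) w) := by
  obtain ⟨hx1, hrx'⟩ := hrx
  obtain ⟨hy1, hsy'⟩ := hsy
  simp only at hx1 hrx' hy1 hsy'
  set L := Nat.lcm x y with hLdef
  obtain ⟨a, ha⟩ := Nat.dvd_lcm_left x y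
  obtain ⟨b, hb⟩ := Nat.dvd_lcm_right x y
  have hL1 : 1 ≤ L := Nat.lcm_pos hx1 hy1
  have ha1 : 1 ≤ a := by by_contra h; push_neg at h; interval_cases a <;> omega
  have hb1 : 1 ≤ b := by by_contra h; push_neg at h; interval_cases b <;> omega
  constructor
  · rintro l ⟨⟨i, hi⟩, ⟨j, hj⟩⟩ hmin
    -- l < L
    have hlL : l < L := by
      by_contra h
      push_neg at h
      have hia : a ≤ i := by
        by_contra hc
        push_neg at hc
        have : x * (i + 1) ≤ x * a := Nat.mul_le_mul_left x hc
        have hxad : x * (i + 1) = x * i + x := by ring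
        omega
      have hjb : b ≤ j := by
        by_contra hc
        push_neg at hc
        have : y * (j + 1) ≤ y * b := Nat.mul_le_mul_left y hc
        have hyad : y * (j + 1) = y * j + y := by ring
        omega
      have e1 : x * (i - a) = x * i - x * a := Nat.mul_sub_left_distrib x i a
      have e2 : y * (j - b) = y * j - y * b := Nat.mul_sub_left_distrib y j b
      have hxa : x * a ≤ x * i := Nat.mul_le_mul_left x hia
      have hyb : y * b ≤ y * j := Nat.mul_le_mul_left y hjb
      have := hmin (l - L) ⟨⟨i - a, by omega⟩, ⟨j - b, by omega⟩⟩
      omega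
    have hxi : x * i < x * a := by omega
    have hia : i < a := lt_of_mul_lt_mul_left hxi (Nat.zero_le x)
    have hyj : y * j < y * b := by omega
    have hjb : j < b := lt_of_mul_lt_mul_left hyj (Nat.zero_le y)
    refine ⟨⟨hL1, hlL⟩, ⟨⟨⟨(i, a), ⟨ha1, hia⟩, ?_⟩, ⟨(j, b), ⟨hb1, hjb⟩, ?_⟩⟩, ?_⟩⟩
    · simp [nmul]; omega
    · simp [nmul]; omega
    · rintro ⟨m, c⟩ ⟨⟨⟨n1, b1⟩, ⟨hb11, hn1⟩, hw1⟩, ⟨⟨n2, b2⟩, ⟨hb21, hn2⟩, hw2⟩⟩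
      simp only [nmul, Prod.mk.injEq] at hw1 hw2
      simp only at hb11 hn1 hb21 hn2
      obtain ⟨hm1, hc1⟩ := hw1
      obtain ⟨hm2, hc2⟩ := hw2
      -- l ≤ m
      have hlm : l ≤ m := hmin m ⟨⟨n1, hm1.symm⟩, ⟨n2, hm2.symm⟩⟩
      -- x ∣ m - l and y ∣ m - l
      have hin1 : i ≤ n1 := Nat.le_of_mul_le_mul_left (show x * i ≤ x * n1 by omega) (by omega)
      have hjn2 : j ≤ n2 := Nat.le_of_mul_le_mul_left (show y * j ≤ y * n2 by omega) (by omega)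
      have ex : x * (n1 - i) = x * n1 - x * i := Nat.mul_sub_left_distrib x n1 i
      have ey : y * (n2 - j) = y * n2 - y * j := Nat.mul_sub_left_distrib y n2 j
      have hxn : x * i ≤ x * n1 := Nat.mul_le_mul_left x hin1
      have hyn : y * j ≤ y * n2 := Nat.mul_le_mul_left y hjn2
      have hdvd : L ∣ m - l := Nat.lcm_dvd ⟨n1 - i, by omega⟩ ⟨n2 - j, by omega⟩
      obtain ⟨n, hn⟩ := hdvd
      have hcdvd : L ∣ c := Nat.lcm_dvd ⟨b1, hc1.symm⟩ ⟨b2, hc2.symm⟩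
      obtain ⟨d, hd⟩ := hcdvd
      -- m < c
      have hmc : m < c := by
        have h1 : x * (n1 + 1) ≤ x * b1 := Nat.mul_le_mul_left x hn1
        have h2 : x * (n1 + 1) = x * n1 + x := by ring
        omega
      have hxb1 : 1 ≤ x * b1 := Nat.one_le_iff_ne_zero.2 (by positivity)
      have hd1 : 1 ≤ d := by by_contra h; push_neg at h; interval_cases d <;> omega
      have hnd : n < d := by
        have : L * n < L * d := by omega
        exact lt_of_mul_lt_mul_left this (Nat.zero_le L)
      refine ⟨(n, d), ⟨hd1, hnd⟩, ?_⟩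
      simp only [nmul, Prod.mk.injEq]
      constructor
      · omega
      · omega
  · rintro hne ⟨w, ⟨⟨q1, b1⟩, _, hw1⟩, ⟨⟨q2, b2⟩, _, hw2⟩⟩
    exact hne ⟨w.1, ⟨q1, (congrArg Prod.fst hw1).symm⟩, ⟨q2, (congrArg Prod.fst hw2).symm⟩⟩
end

section
/- Let U and A satisfy the hypotheses of the Zappa-Szép right LCM lemma. For every a ∈ A, the singleton {(e_U, a)} is a foundation set in U ⋈ A; that is, for every (u,b) ∈ U ⋈ A, the principal right ideals (e_U,a)(U⋈A) and (u,b)(U⋈A) have nonempty intersection. -/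
theorem stmt14
    {U A : Type*} [Monoid U] [Monoid A]
    (hU : ∀ a b c : U, a * b = a * c → b = c)
    (hA : ∀ a b c : A, a * b = a * c → b = c)
    (act : A → U → U) (res : A → U → A)
    (B1 : ∀ u, act 1 u = u)
    (B2 : ∀ a b u, act (a * b) u = act a (act b u))
    (B3 : ∀ a, act a 1 = 1)
    (B4 : ∀ a, res a 1 = a)
    (B5 : ∀ a u v, act a (u * v) = act a u * act (res a u) v)
    (B6 : ∀ a u v, res a (u * v) = res (res a u) v)
    (B7 : ∀ u, res 1 u = 1)
    (B8 : ∀ a b u, res (a * b) u = res a (act b u) * res b u)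
    (hUlcm : ∀ u v : U, (∃ w, IsRCM (· * ·) u v w) → ∃ w, IsRLCM (· * ·) u v w)
    (hAtot : ∀ a b : A, (∃ c, a * c = b) ∨ (∃ c, b * c = a))
    (hbij : ∀ a : A, Function.Bijective (act a))
    (a : A) :
    let zmul : U × A → U × A → U × A :=
      fun p q => (p.1 * act p.2 q.1, res p.2 q.1 * q.2)
    ∀ p : U × A, ∃ w, IsRCM zmul ((1 : U), a) p w := by
  intro zmul p
  obtain ⟨u, b⟩ := p
  obtain ⟨v, hv⟩ := (hbij a).2 u
  rcases hAtot (res a v) b with ⟨c, hc⟩ | ⟨c, hc⟩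
  · refine ⟨(u, b), ⟨(v, c), ?_⟩, ⟨(1, 1), ?_⟩⟩
    · simp only [zmul, one_mul, hv, hc]
    · simp only [zmul, B3, B4, mul_one]
  · refine ⟨(u, res a v), ⟨(v, 1), ?_⟩, ⟨(1, c), ?_⟩⟩
    · simp only [zmul, one_mul, hv, mul_one]
    · simp only [zmul, B3, B4, mul_one, hc]
end

section
/- Let U and A satisfy the hypotheses of the Zappa-Szép right LCM lemma. If F ⊆ U is a foundation set in U, then {(u, e_A) : u ∈ F} is a foundation set in U ⋈ A. -/
theorem stmt15
    {U A : Type*} [Monoid U] [Monoid A]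
    (hU : ∀ a b c : U, a * b = a * c → b = c)
    (hA : ∀ a b c : A, a * b = a * c → b = c)
    (act : A → U → U) (res : A → U → A)
    (B1 : ∀ u, act 1 u = u)
    (B2 : ∀ a b u, act (a * b) u = act a (act b u))
    (B3 : ∀ a, act a 1 = 1)
    (B4 : ∀ a, res a 1 = a)
    (B5 : ∀ a u v, act a (u * v) = act a u * act (res a u) v)
    (B6 : ∀ a u v, res a (u * v) = res (res a u) v)
    (B7 : ∀ u, res 1 u = 1)
    (B8 : ∀ a b u, res (a * b) u = res a (act b u) * res b u)
    (hUlcm : ∀ u v : U, (∃ w, IsRCM (· * ·) u v w) → ∃ w, IsRLCM (· * ·) u v w)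
    (hAtot : ∀ a b : A, (∃ c, a * c = b) ∨ (∃ c, b * c = a))
    (hbij : ∀ a : A, Function.Bijective (act a))
    (F : Finset U) (hF : ∀ v : U, ∃ u ∈ F, ∃ w, IsRCM (· * ·) u v w) :
    let zmul : U × A → U × A → U × A :=
      fun p q => (p.1 * act p.2 q.1, res p.2 q.1 * q.2)
    ∀ p : U × A, ∃ u ∈ F, ∃ w, IsRCM zmul (u, (1 : A)) p w := by
  intro zmul p
  obtain ⟨u, hu, w, ⟨s, hs⟩, ⟨t, ht⟩⟩ := hF p.1
  obtain ⟨t', ht'⟩ := (hbij p.2).2 t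
  refine ⟨u, hu, (w, res p.2 t'), ⟨(s, res p.2 t'), ?_⟩, ⟨(t', 1), ?_⟩⟩
  · show (u * act 1 s, res 1 s * res p.2 t') = _
    rw [B1, B7, one_mul]; exact Prod.ext hs rfl
  · show (p.1 * act p.2 t', res p.2 t' * 1) = _
    rw [ht', mul_one]; exact Prod.ext ht rfl
end

section
/- Let U and A satisfy the hypotheses of the Zappa-Szép right LCM lemma. If G is a foundation set in U ⋈ A, then {u ∈ U : (u,a) ∈ G for some a ∈ A} is a foundation set in U. -/
theorem stmt16
    {U A : Type*} [Monoid U] [Monoid A]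
    (hU : ∀ a b c : U, a * b = a * c → b = c)
    (hA : ∀ a b c : A, a * b = a * c → b = c)
    (act : A → U → U) (res : A → U → A)
    (B1 : ∀ u, act 1 u = u)
    (B2 : ∀ a b u, act (a * b) u = act a (act b u))
    (B3 : ∀ a, act a 1 = 1)
    (B4 : ∀ a, res a 1 = a)
    (B5 : ∀ a u v, act a (u * v) = act a u * act (res a u) v)
    (B6 : ∀ a u v, res a (u * v) = res (res a u) v)
    (B7 : ∀ u, res 1 u = 1)
    (B8 : ∀ a b u, res (a * b) u = res a (act b u) * res b u)
    (hUlcm : ∀ u v : U, (∃ w, IsRCM (· * ·) u v w) → ∃ w, IsRLCM (· * ·) u v w)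
    (hAtot : ∀ a b : A, (∃ c, a * c = b) ∨ (∃ c, b * c = a))
    (hbij : ∀ a : A, Function.Bijective (act a))
    (G : Finset (U × A))
    (hG : ∀ p : U × A, ∃ q ∈ G, ∃ w,
      IsRCM (fun p q : U × A => (p.1 * act p.2 q.1, res p.2 q.1 * q.2)) q p w) :
    ∀ v : U, ∃ q ∈ G, ∃ w, IsRCM (· * ·) q.1 v w := by
  intro v
  obtain ⟨q, hq, w, ⟨r, hr⟩, ⟨s, hs⟩⟩ := hG (v, 1)
  refine ⟨q, hq, w.1, ⟨act q.2 r.1, ?_⟩, ⟨s.1, ?_⟩⟩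
  · exact congrArg Prod.fst hr
  · have := congrArg Prod.fst hs
    simpa [B1] using this
end

section
/- Let X be a finite alphabet and for each n let P_w = w X* denote the principal right ideal of w in X*. If F ⊆ X* is a foundation set (finite, and every word has a common right multiple with some element of F), N = max{|w| : w ∈ F}, and F' = ⋃_{w ∈ F} {ww' : w' ∈ X^{N−|w|}}, then F' = X^N. -/
theorem stmt19 {X : Type*} [Fintype X] (F : Finset (List X))
    (hF : ∀ z : List X, ∃ w ∈ F, ∃ k : List X,
      (∃ w' : List X, w ++ w' = k) ∧ (∃ z' : List X, z ++ z' = k))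
    (N : ℕ) (hN : ∀ w ∈ F, w.length ≤ N) (hNmax : ∃ w ∈ F, w.length = N) :
    {v : List X | ∃ w ∈ F, ∃ w' : List X, w'.length = N - w.length ∧ v = w ++ w'} =
      {v : List X | v.length = N} := by
  ext v
  simp only [Set.mem_setOf_eq]
  constructor
  · rintro ⟨w, hw, w', hw', rfl⟩
    have := hN w hw
    simp [hw']
    omega
  · intro hv
    obtain ⟨w, hw, k, ⟨w', hw'⟩, z', hz'⟩ := hF v
    have hwlen : w.length ≤ v.length := by rw [hv]; exact hN w hw
    have hpre : w <+: v := by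
      rcases List.prefix_or_prefix_of_prefix (⟨w', hw'⟩ : w <+: k) (⟨z', hz'⟩ : v <+: k)
        with h | h
      · exact h
      · rw [h.eq_of_length_le hwlen]
    obtain ⟨t, rfl⟩ := hpre
    exact ⟨w, hw, t, by simp at hv ⊢; omega, rfl⟩
end
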